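/- arXiv:1902.08132 — 2 statements merged into one kernel-verified Lean document; each statement's English description precedes it below -/
import Mathlib

section
/- Let V̄_f : X_f → ℝ be continuous on a closed set X_f ⊆ ℝⁿ, with min_x V̄_f(x) = 0 attained exactly on a nonempty set X̄ (i.e., V̄_f(x) = 0 iff x ∈ X̄, and V̄_f ≥ 0 on X_f). If X_f is compact, then there exists a K∞-function α such that V̄_f(x) ≤ α(‖x‖_{X̄}) for all x ∈ X_f. -/
/-- A K∞-function: continuous (on the nonnegative reals), zero at zero,
strictly increasing and unbounded. -/
def IsKInf (α : ℝ → ℝ) : Prop :=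
  ContinuousOn α (Set.Ici 0) ∧ α 0 = 0 ∧ StrictMonoOn α (Set.Ici 0) ∧
    ∀ M : ℝ, ∃ r : ℝ, 0 ≤ r ∧ M ≤ α r

/-- a continuous nonnegative function on a compact set `X_f`,
vanishing exactly on a nonempty set `X̄`, is upper bounded by a K∞-function of
the distance to `X̄`. -/
theorem stmt8 {n : ℕ} (Xf Xbar : Set (EuclideanSpace ℝ (Fin n)))
    (hclosed : IsClosed Xf) (hcomp : IsCompact Xf)
    (hne : Xbar.Nonempty) (hsub : Xbar ⊆ Xf)
    (Vf : EuclideanSpace ℝ (Fin n) → ℝ)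
    (hcont : ContinuousOn Vf Xf)
    (hnn : ∀ x ∈ Xf, 0 ≤ Vf x)
    (hzero : ∀ x ∈ Xf, Vf x = 0 ↔ x ∈ Xbar) :
    ∃ α : ℝ → ℝ, IsKInf α ∧ ∀ x ∈ Xf, Vf x ≤ α (Metric.infDist x Xbar) := by
  classical
  set d : EuclideanSpace ℝ (Fin n) → ℝ := fun x => Metric.infDist x Xbar with hd
  have hd0 : ∀ x, 0 ≤ d x := fun x => Metric.infDist_nonneg
  set φ : ℝ → EuclideanSpace ℝ (Fin n) → ℝ :=
    fun r x => Vf x * min 1 (r / d x) with hφ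
  set w : ℝ → ℝ := fun r => sSup (φ r '' Xf) with hw
  obtain ⟨x₀, hx₀⟩ := hne
  have hx₀f : x₀ ∈ Xf := hsub hx₀
  have hXfne : Xf.Nonempty := ⟨x₀, hx₀f⟩
  -- bound M
  obtain ⟨xM, hxM, hxMmax⟩ := hcomp.exists_isMaxOn hXfne hcont
  set M : ℝ := Vf xM with hM
  have hM0 : 0 ≤ M := hnn xM hxM
  have hVfM : ∀ x ∈ Xf, Vf x ≤ M := fun x hx => hxMmax hx
  -- Xbar is closed
  have hXbar_eq : Xbar = Xf ∩ Vf ⁻¹' {0} := by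
    ext x
    constructor
    · intro hx
      exact ⟨hsub hx, (hzero x (hsub hx)).2 hx⟩
    · rintro ⟨hx, hv⟩
      exact (hzero x hx).1 hv
  have hXbar_closed : IsClosed Xbar := by
    rw [hXbar_eq]
    exact hcont.preimage_isClosed_of_isClosed hclosed isClosed_singleton
  -- basic bounds on φ
  have hmin_nonneg : ∀ r, 0 ≤ r → ∀ x, 0 ≤ min 1 (r / d x) := by
    intro r hr x
    exact le_min zero_le_one (div_nonneg hr (hd0 x))
  have hφ_nonneg : ∀ r, 0 ≤ r → ∀ x ∈ Xf, 0 ≤ φ r x := by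
    intro r hr x hx
    exact mul_nonneg (hnn x hx) (hmin_nonneg r hr x)
  have hφ_le_Vf : ∀ r x, x ∈ Xf → φ r x ≤ Vf x := by
    intro r x hx
    calc φ r x ≤ Vf x * 1 := mul_le_mul_of_nonneg_left (min_le_left _ _) (hnn x hx)
    _ = Vf x := mul_one _
  have hφ_le : ∀ r x, x ∈ Xf → φ r x ≤ M := fun r x hx =>
    (hφ_le_Vf r x hx).trans (hVfM x hx)
  have hbdd : ∀ r, BddAbove (φ r '' Xf) := by
    intro r
    refine ⟨M, ?_⟩
    rintro y ⟨x, hx, rfl⟩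
    exact hφ_le r x hx
  have hSne : ∀ r, (φ r '' Xf).Nonempty := fun r => ⟨φ r x₀, x₀, hx₀f, rfl⟩
  have hφx₀ : ∀ r, φ r x₀ = 0 := by
    intro r
    have : Vf x₀ = 0 := (hzero x₀ hx₀f).2 hx₀
    simp [hφ, this]
  have hw_nonneg : ∀ r, 0 ≤ w r := by
    intro r
    have := le_csSup (hbdd r) ⟨x₀, hx₀f, rfl⟩
    rw [hφx₀ r] at this
    exact this
  have hw_le : ∀ r, w r ≤ M := by
    intro r
    apply csSup_le (hSne r)
    rintro y ⟨x, hx, rfl⟩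
    exact hφ_le r x hx
  have hw0 : w 0 = 0 := by
    apply le_antisymm _ (hw_nonneg 0)
    apply csSup_le (hSne 0)
    rintro y ⟨x, hx, rfl⟩
    simp [hφ]
  -- monotonicity of w
  have hφ_mono : ∀ r₁ r₂ x, 0 ≤ r₁ → r₁ ≤ r₂ → x ∈ Xf → φ r₁ x ≤ φ r₂ x := by
    intro r₁ r₂ x hr₁ hr hx
    apply mul_le_mul_of_nonneg_left _ (hnn _ hx)
    apply min_le_min le_rfl
    rcases eq_or_lt_of_le (hd0 x) with h | h
    · rw [← h]; simp
    · gcongr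
  have hw_mono : ∀ r₁ r₂, 0 ≤ r₁ → r₁ ≤ r₂ → w r₁ ≤ w r₂ := by
    intro r₁ r₂ hr₁ hr
    apply csSup_le (hSne r₁)
    rintro y ⟨x, hx, rfl⟩
    exact (hφ_mono r₁ r₂ x hr₁ hr hx).trans (le_csSup (hbdd r₂) ⟨x, hx, rfl⟩)
  -- scaling: w r' ≤ (r'/r) * w r for 0 < r ≤ r'
  have hw_scale : ∀ r r', 0 < r → r ≤ r' → w r' ≤ (r' / r) * w r := by
    intro r r' hr hrr
    apply csSup_le (hSne r')
    rintro y ⟨x, hx, rfl⟩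
    have hkey : φ r' x ≤ (r' / r) * φ r x := by
      rcases eq_or_lt_of_le (hd0 x) with h | h
      · have : d x = 0 := h.symm
        simp [hφ, this]
      · have hrr1 : (1:ℝ) ≤ r' / r := (one_le_div hr).2 hrr
        have hmin : min 1 (r' / d x) ≤ (r' / r) * min 1 (r / d x) := by
          rcases le_total (r / d x) 1 with hc | hc
          · rw [min_eq_right hc]
            have heq : (r' / r) * (r / d x) = r' / d x := by
              field_simp
            rw [heq]
            exact min_le_right _ _
          · rw [min_eq_left hc, mul_one]
            exact (min_le_left _ _).trans hrr1
        calc φ r' x = Vf x * min 1 (r' / d x) := rfl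
        _ ≤ Vf x * ((r' / r) * min 1 (r / d x)) :=
            mul_le_mul_of_nonneg_left hmin (hnn x hx)
        _ = (r' / r) * φ r x := by rw [hφ]; ring
    refine hkey.trans ?_
    apply mul_le_mul_of_nonneg_left (le_csSup (hbdd r) ⟨x, hx, rfl⟩)
    exact div_nonneg (hr.le.trans hrr) hr.le
  -- small-distance control
  have hsmall : ∀ ε > (0:ℝ), ∃ δ > (0:ℝ), ∀ x ∈ Xf, d x < δ → Vf x ≤ ε := by
    intro ε hε
    set K : Set (EuclideanSpace ℝ (Fin n)) := Xf ∩ Vf ⁻¹' Set.Ici ε with hK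
    have hKclosed : IsClosed K := hcont.preimage_isClosed_of_isClosed hclosed isClosed_Ici
    have hKcomp : IsCompact K := hcomp.of_isClosed_subset hKclosed Set.inter_subset_left
    rcases K.eq_empty_or_nonempty with hKe | hKne
    · refine ⟨1, one_pos, fun x hx _ => ?_⟩
      by_contra hcon
      push_neg at hcon
      have : x ∈ K := ⟨hx, hcon.le⟩
      rw [hKe] at this
      exact this
    · have hdc : ContinuousOn d K :=
        (Metric.continuous_infDist_pt Xbar).continuousOn
      obtain ⟨x₁, hx₁K, hx₁min⟩ := hKcomp.exists_isMinOn hKne hdc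
      have hx₁pos : 0 < d x₁ := by
        rw [hd]
        refine (hXbar_closed.notMem_iff_infDist_pos ⟨x₀, hx₀⟩).1 ?_
        intro hmem
        have h0 : Vf x₁ = 0 := (hzero x₁ hx₁K.1).2 hmem
        have : ε ≤ Vf x₁ := hx₁K.2
        linarith
      refine ⟨d x₁, hx₁pos, fun x hx hdx => ?_⟩
      by_contra hcon
      push_neg at hcon
      have hxK : x ∈ K := ⟨hx, hcon.le⟩
      exact absurd (hx₁min hxK) (not_le.2 hdx)
  -- the Lipschitz-type bound away from 0
  have hLip : ∀ r₀ > (0:ℝ), ∀ r ≥ (0:ℝ), |w r - w r₀| ≤ (w r₀ / r₀) * |r - r₀| := by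
    intro r₀ hr₀ r hr
    rcases le_total r r₀ with hc | hc
    · have hmono := hw_mono r r₀ hr hc
      rw [abs_of_nonpos (by linarith), abs_of_nonpos (by linarith)]
      rcases eq_or_lt_of_le hr with h | h
      · subst h
        rw [hw0]
        have hcc : w r₀ / r₀ * r₀ = w r₀ := div_mul_cancel₀ _ hr₀.ne'
        nlinarith [hcc]
      · have hs := hw_scale r r₀ h hc
        have h3 : w r₀ * r ≤ r₀ * w r := by
          rw [div_mul_eq_mul_div, le_div_iff₀ h] at hs
          linarith
        have hrr0 : 0 ≤ (w r₀ / r₀) * r₀ - w r₀ := by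
          rw [div_mul_cancel₀ _ hr₀.ne']
          linarith
        have hdnn : 0 ≤ w r₀ / r₀ := div_nonneg (hw_nonneg r₀) hr₀.le
        have h4 : (w r₀ - w r) * r₀ ≤ w r₀ * (r₀ - r) := by nlinarith
        have h5 : w r₀ * (r₀ - r) = (w r₀ / r₀) * (r₀ - r) * r₀ := by
          field_simp
        nlinarith
    · have hmono := hw_mono r₀ r hr₀.le hc
      rw [abs_of_nonneg (by linarith), abs_of_nonneg (by linarith)]
      have hs := hw_scale r₀ r hr₀ hc
      have h3 : w r * r₀ ≤ r * w r₀ := by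
        rw [div_mul_eq_mul_div, le_div_iff₀ hr₀] at hs
        linarith
      have h5 : (w r₀ / r₀) * (r - r₀) * r₀ = w r₀ * (r - r₀) := by
        field_simp
      nlinarith
  -- define α
  refine ⟨fun r => r + w r, ⟨?_, ?_, ?_, ?_⟩, ?_⟩
  · -- continuity on Ici 0
    intro r₀ hr₀
    rw [Set.mem_Ici] at hr₀
    rcases eq_or_lt_of_le hr₀ with h | h
    · -- continuity at 0
      rw [Metric.continuousWithinAt_iff]
      intro ε hε
      obtain ⟨δ, hδ, hδprop⟩ := hsmall (ε/4) (by linarith)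
      refine ⟨min (min δ (ε/4)) (ε * δ / (4 * (M + 1))),
        lt_min (lt_min hδ (by linarith)) (by positivity), fun r hrIci hrd => ?_⟩
      rw [Set.mem_Ici] at hrIci
      rw [Real.dist_eq, ← h, sub_zero] at hrd
      rw [abs_of_nonneg hrIci] at hrd
      have hrδ : r < δ := lt_of_lt_of_le hrd ((min_le_left _ _).trans (min_le_left _ _))
      have hrε : r < ε / 4 := lt_of_lt_of_le hrd ((min_le_left _ _).trans (min_le_right _ _))
      have hrδ2 : r < ε * δ / (4 * (M + 1)) := lt_of_lt_of_le hrd (min_le_right _ _)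
      have hwr : w r ≤ ε / 4 + M * (r / δ) := by
        apply csSup_le (hSne r)
        rintro y ⟨x, hx, rfl⟩
        rcases le_or_gt (Vf x) (ε/4) with hv | hv
        · have hb := hφ_le_Vf r x hx
          have hφε : φ r x ≤ ε / 4 := hb.trans hv
          have hMr : 0 ≤ M * (r / δ) := by positivity
          linarith
        · -- Vf x > ε/4 so d x ≥ δ
          have hdx : δ ≤ d x := by
            by_contra hcon
            push_neg at hcon
            have := hδprop x hx hcon
            linarith
          have h1 : φ r x ≤ Vf x * (r / d x) :=
            mul_le_mul_of_nonneg_left (min_le_right _ _) (hnn x hx)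
          have hdpos : 0 < d x := lt_of_lt_of_le hδ hdx
          have h2 : r / d x ≤ r / δ := by gcongr
          have h3 : Vf x * (r / d x) ≤ M * (r / δ) := by
            apply mul_le_mul (hVfM x hx) h2 (by positivity) hM0
          have hq : 0 ≤ ε / 4 := by linarith
          linarith
      have hbound : M * (r / δ) < ε / 2 := by
        rw [mul_div_assoc'] at *
        rw [div_lt_iff₀ hδ]
        have : M * r ≤ (M + 1) * r := by nlinarith
        calc M * r ≤ (M+1) * r := this
        _ < (M+1) * (ε * δ / (4 * (M+1))) := by
            apply mul_lt_mul_of_pos_left hrδ2 (by linarith)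
        _ = ε * δ / 4 := by field_simp
        _ ≤ ε / 2 * δ := by nlinarith
      rw [Real.dist_eq, ← h, hw0]
      have : |r + w r - (0 + 0)| = r + w r := by
        rw [add_zero, sub_zero]
        exact abs_of_nonneg (by linarith [hw_nonneg r])
      rw [this]
      calc r + w r ≤ r + (ε/4 + M * (r/δ)) := by linarith
      _ < ε := by linarith
    · -- continuity at r₀ > 0
      rw [Metric.continuousWithinAt_iff]
      intro ε hε
      set C : ℝ := w r₀ / r₀ with hC
      have hC0 : 0 ≤ C := div_nonneg (hw_nonneg r₀) hr₀
      refine ⟨min (ε / (2 * (C + 1))) (ε / 4), lt_min (by positivity) (by linarith), fun r hrIci hrd => ?_⟩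
      rw [Set.mem_Ici] at hrIci
      rw [Real.dist_eq] at hrd ⊢
      have h1 : |w r - w r₀| ≤ C * |r - r₀| := hLip r₀ h r hrIci
      have h2 : |r - r₀| < ε / (2 * (C + 1)) := lt_of_lt_of_le hrd (min_le_left _ _)
      have h3 : |r - r₀| < ε / 4 := lt_of_lt_of_le hrd (min_le_right _ _)
      have h4 : C * |r - r₀| < ε / 2 := by
        calc C * |r - r₀| ≤ (C+1) * |r - r₀| := by nlinarith [abs_nonneg (r - r₀)]
        _ < (C+1) * (ε / (2 * (C+1))) := by
            apply mul_lt_mul_of_pos_left h2 (by linarith)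
        _ = ε / 2 := by field_simp
      calc |r + w r - (r₀ + w r₀)| = |(r - r₀) + (w r - w r₀)| := by ring_nf
      _ ≤ |r - r₀| + |w r - w r₀| := abs_add_le _ _
      _ < ε / 4 + ε / 2 := by linarith
      _ < ε := by linarith
  · simp [hw0]
  · intro a ha b hb hab
    rw [Set.mem_Ici] at ha hb
    have := hw_mono a b ha hab.le
    simp only
    linarith
  · intro M'
    refine ⟨max M' 0, le_max_right _ _, ?_⟩
    show M' ≤ max M' 0 + w (max M' 0)
    have := hw_nonneg (max M' 0)
    have := le_max_left M' 0
    linarith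
  · intro x hx
    rcases eq_or_lt_of_le (hd0 x) with h | h
    · have hxb : x ∈ Xbar :=
        (hXbar_closed.mem_iff_infDist_zero ⟨x₀, hx₀⟩).2 h.symm
      have hv0 : Vf x = 0 := (hzero x hx).2 hxb
      show Vf x ≤ d x + w (d x)
      rw [hv0, ← h, hw0]
      norm_num
    · have h1 : φ (d x) x = Vf x := by
        rw [hφ]
        simp only
        rw [div_self (ne_of_gt h), min_self, mul_one]
      have h2 : φ (d x) x ≤ w (d x) := le_csSup (hbdd _) ⟨x, hx, rfl⟩
      rw [h1] at h2
      have := hd0 x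
      show Vf x ≤ d x + w (d x)
      linarith
end

section
/- Consider the NCS stage cost ℓ(x,u) = x_pᵀQx_p + γ·u_cᵀRu_c + (1−γ)·u_sᵀRu_s with Q, R symmetric positive definite and γ ∈ {0,1}, input-hold dynamics u_s⁺ = γu_c + (1−γ)u_s, and storage function λ(x) = u_sᵀSu_s with R ≻ S ≻ 0 (S symmetric). Then the rotated cost L(x,u) = ℓ(x,u) + λ(x) − λ(x⁺) satisfies L(x,u) ≥ x_pᵀQx_p + u_sᵀSu_s for all x_p, u_s, u_c and γ ∈ {0,1}. -/
open Matrix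

/-- the rotated NCS stage cost `L = ℓ + λ − λ∘f` with storage
`λ(x) = u_sᵀSu_s`, `R ≻ S ≻ 0`, satisfies `L(x,u) ≥ x_pᵀQx_p + u_sᵀSu_s`. -/
theorem stmt14 {np mp : ℕ}
    (Q : Matrix (Fin np) (Fin np) ℝ) (R S : Matrix (Fin mp) (Fin mp) ℝ)
    (hQ : Q.PosDef) (hR : R.PosDef) (hS : S.PosDef) (hRS : (R - S).PosDef)
    (xp : Fin np → ℝ) (us uc : Fin mp → ℝ) (γ : ℝ) (hγ : γ = 0 ∨ γ = 1) :
    xp ⬝ᵥ Q.mulVec xp + us ⬝ᵥ S.mulVec us ≤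
      (xp ⬝ᵥ Q.mulVec xp + γ * (uc ⬝ᵥ R.mulVec uc) + (1 - γ) * (us ⬝ᵥ R.mulVec us))
        + us ⬝ᵥ S.mulVec us
        - ((γ • uc + (1 - γ) • us) ⬝ᵥ S.mulVec (γ • uc + (1 - γ) • us)) := by
  rcases hγ with h | h <;> subst h <;> simp
  · have := hRS.posSemidef.dotProduct_mulVec_nonneg us
    rw [Matrix.sub_mulVec, dotProduct_sub, sub_nonneg, star_trivial] at this; linarith
  · have := hRS.posSemidef.dotProduct_mulVec_nonneg uc
    rw [Matrix.sub_mulVec, dotProduct_sub, sub_nonneg, star_trivial] at this; linarith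
end
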